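/- The singular value thresholding operator solves the proximal problem for the nuclear norm: for any matrix M ∈ ℝ^{m×n} and τ > 0, the unique minimizer of X ↦ τ‖X‖_* + (1/2)‖X − M‖_F² is D_τ(M) = U diag(max(σ_i − τ, 0)) V^T, where M = U diag(σ_i) V^T is an SVD of M. -/

import Mathlib

open Matrix Finset

/-- Rectangular diagonal matrix with diagonal entries σ. -/
noncomputable def svdDiag (m n : ℕ) (σ : Fin (min m n) → ℝ) :
    Matrix (Fin m) (Fin n) ℝ :=
  Matrix.of fun i j =>
    if h : (i : ℕ) = (j : ℕ) ∧ (i : ℕ) < min m n then σ ⟨i, h.2⟩ else 0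

/-- Nuclear norm of a real matrix: sum of its singular values, i.e. the sum of
the square roots of the eigenvalues of Xᵀ X. -/
noncomputable def nuclearNorm {m n : ℕ} (X : Matrix (Fin m) (Fin n) ℝ) : ℝ :=
  ∑ i : Fin n, Real.sqrt ((Matrix.isHermitian_conjTranspose_mul_self X).eigenvalues i)

section SVTHelpers

open Polynomial

lemma charpoly_conj_orth {n : ℕ} (Q B : Matrix (Fin n) (Fin n) ℝ)
    (hQ : Q * Qᵀ = 1) :
    (Q * B * Qᵀ).charpoly = B.charpoly := by
  classical
  have hmm : ∀ (P R : Matrix (Fin n) (Fin n) ℝ),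
      (C : ℝ →+* ℝ[X]).mapMatrix (P * R) = C.mapMatrix P * C.mapMatrix R :=
    fun P R => map_mul _ _ _
  have key : charmatrix (Q * B * Qᵀ) = C.mapMatrix Q * charmatrix B * C.mapMatrix Qᵀ := by
    rw [charmatrix, charmatrix, Matrix.mul_sub, Matrix.sub_mul]
    congr 1
    · have hc : C.mapMatrix Q * Matrix.scalar (Fin n) (X : ℝ[X]) =
          Matrix.scalar (Fin n) (X : ℝ[X]) * C.mapMatrix Q :=
        (Matrix.scalar_commute (X : ℝ[X]) (fun r => Commute.all _ _) _).symm
      rw [hc, mul_assoc, ← hmm, hQ, _root_.map_one, mul_one]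
    · rw [← hmm, ← hmm]
  have hdet : (C.mapMatrix Q).det * (C.mapMatrix Qᵀ).det = 1 := by
    rw [← det_mul, ← hmm, hQ, _root_.map_one, det_one]
  rw [Matrix.charpoly, Matrix.charpoly, key, det_mul, det_mul]
  calc (C.mapMatrix Q).det * (charmatrix B).det * (C.mapMatrix Qᵀ).det
      = (charmatrix B).det * ((C.mapMatrix Q).det * (C.mapMatrix Qᵀ).det) := by ring
    _ = (charmatrix B).det := by rw [hdet, mul_one]

lemma sum_f_eigenvalues {n : ℕ} {A : Matrix (Fin n) (Fin n) ℝ} (hA : A.IsHermitian)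
    (Q : Matrix (Fin n) (Fin n) ℝ) (d : Fin n → ℝ)
    (hQ : Q * Qᵀ = 1)
    (hAQ : A = Q * Matrix.diagonal d * Qᵀ) (f : ℝ → ℝ) :
    ∑ i, f (hA.eigenvalues i) = ∑ i, f (d i) := by
  classical
  set Q₀ : Matrix (Fin n) (Fin n) ℝ := (hA.eigenvectorUnitary : Matrix (Fin n) (Fin n) ℝ)
    with hQ₀def
  have hQ₀ : Q₀ * Q₀ᵀ = 1 := by
    have h := (Matrix.mem_unitaryGroup_iff).mp hA.eigenvectorUnitary.2
    simpa [Matrix.star_eq_conjTranspose,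
      Matrix.conjTranspose_eq_transpose_of_trivial] using h
  have hspec : A = Q₀ * Matrix.diagonal hA.eigenvalues * Q₀ᵀ := by
    have h := hA.spectral_theorem
    simpa [Matrix.star_eq_conjTranspose,
      Matrix.conjTranspose_eq_transpose_of_trivial] using h
  have hdiagcp : ∀ (e : Fin n → ℝ),
      (Matrix.diagonal e).charpoly = ∏ i, (X - C (e i)) := by
    intro e
    rw [Matrix.charpoly_of_upperTriangular _ (Matrix.blockTriangular_diagonal e)]
    simp
  have h1 : (Matrix.diagonal hA.eigenvalues).charpoly = (Matrix.diagonal d).charpoly := by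
    rw [← charpoly_conj_orth Q₀ _ hQ₀, ← hspec, hAQ, charpoly_conj_orth Q _ hQ]
  have hprod : ∀ (e : Fin n → ℝ),
      (∏ i, (X - C (e i))) = ((Finset.univ.val.map e).map (fun a => X - C a)).prod := by
    intro e
    rw [Multiset.map_map]
    rfl
  have h3 : Multiset.map hA.eigenvalues Finset.univ.val = Multiset.map d Finset.univ.val := by
    have h := congrArg Polynomial.roots h1
    rw [hdiagcp, hdiagcp, hprod, hprod, Polynomial.roots_multiset_prod_X_sub_C,
      Polynomial.roots_multiset_prod_X_sub_C] at h
    exact h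
  have hs : ∀ (e : Fin n → ℝ),
      ∑ i, f (e i) = ((Multiset.map e Finset.univ.val).map f).sum := by
    intro e
    rw [Multiset.map_map]
    rfl
  rw [hs, hs, h3]

lemma svdDiag_sub {m n : ℕ} (a b : Fin (min m n) → ℝ) :
    svdDiag m n a - svdDiag m n b = svdDiag m n (fun j => a j - b j) := by
  ext i j
  simp only [svdDiag, Matrix.sub_apply, Matrix.of_apply]
  by_cases h : (i : ℕ) = (j : ℕ) ∧ (i : ℕ) < min m n
  · rw [dif_pos h, dif_pos h, dif_pos h]
  · rw [dif_neg h, dif_neg h, dif_neg h, sub_zero]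

lemma svdDiag_transpose_mul {m n : ℕ} (a b : Fin (min m n) → ℝ) :
    (svdDiag m n a)ᵀ * svdDiag m n b =
      Matrix.diagonal (fun j : Fin n =>
        if h : (j : ℕ) < min m n then a ⟨j, h⟩ * b ⟨j, h⟩ else 0) := by
  ext j k
  simp only [Matrix.mul_apply, Matrix.transpose_apply, svdDiag, Matrix.of_apply]
  by_cases hjk : j = k
  · subst hjk
    by_cases hj : (j : ℕ) < min m n
    · have hjm : (j : ℕ) < m := lt_of_lt_of_le hj (min_le_left m n)
      rw [Matrix.diagonal_apply_eq, dif_pos hj]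
      rw [Finset.sum_eq_single (⟨(j : ℕ), hjm⟩ : Fin m)]
      · rw [dif_pos ⟨rfl, hj⟩, dif_pos ⟨rfl, hj⟩]
      · intro i _ hi
        rcases Decidable.em ((i : ℕ) = (j : ℕ) ∧ (i : ℕ) < min m n) with h | h
        · exact absurd (Fin.ext h.1 : i = ⟨(j : ℕ), hjm⟩) hi
        · rw [dif_neg h, zero_mul]
      · intro h; exact absurd (Finset.mem_univ _) h
    · rw [Matrix.diagonal_apply_eq, dif_neg hj]
      apply Finset.sum_eq_zero
      intro i _
      rcases Decidable.em ((i : ℕ) = (j : ℕ) ∧ (i : ℕ) < min m n) with h | h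
      · exact absurd (h.1 ▸ h.2) hj
      · rw [dif_neg h, zero_mul]
  · rw [Matrix.diagonal_apply_ne _ hjk]
    apply Finset.sum_eq_zero
    intro i _
    rcases Decidable.em ((i : ℕ) = (j : ℕ) ∧ (i : ℕ) < min m n) with h | h
    · rcases Decidable.em ((i : ℕ) = (k : ℕ) ∧ (i : ℕ) < min m n) with h' | h'
      · exact absurd (Fin.ext (h.1 ▸ h'.1 : (j : ℕ) = (k : ℕ))) hjk
      · rw [dif_neg h', mul_zero]
    · rw [dif_neg h, zero_mul]

lemma sum_dite_min {m n : ℕ} (F : Fin (min m n) → ℝ) :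
    (∑ j : Fin n, if h : (j : ℕ) < min m n then F ⟨j, h⟩ else 0)
      = ∑ j : Fin (min m n), F j := by
  have h1 : (∑ j ∈ Finset.univ.map (Fin.castLEEmb (min_le_right m n)),
      if h : (j : ℕ) < min m n then F ⟨j, h⟩ else 0) = ∑ j : Fin (min m n), F j := by
    rw [Finset.sum_map]
    apply Finset.sum_congr rfl
    intro j _
    have hc : ((Fin.castLEEmb (min_le_right m n)) j : ℕ) < min m n := j.2
    rw [dif_pos hc]
    have : (⟨((Fin.castLEEmb (min_le_right m n)) j : ℕ), hc⟩ : Fin (min m n)) = j :=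
      Fin.ext rfl
    rw [this]
  rw [← h1]
  symm
  apply Finset.sum_subset (Finset.subset_univ _)
  intro j _ hj
  rw [dif_neg]
  intro hlt
  exact hj (Finset.mem_map.mpr ⟨⟨(j : ℕ), hlt⟩, Finset.mem_univ _, Fin.ext rfl⟩)

lemma dual_bound {m n : ℕ} (τ : ℝ) (hτ : 0 ≤ τ) (W X : Matrix (Fin m) (Fin n) ℝ)
    (hop : ∀ (Q : Matrix (Fin n) (Fin n) ℝ), Q * Qᵀ = 1 → Qᵀ * Q = 1 →
      ∀ i, ((W * Q)ᵀ * (W * Q)) i i ≤ τ ^ 2) :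
    (Wᵀ * X).trace ≤ τ * nuclearNorm X := by
  classical
  set hH := Matrix.isHermitian_conjTranspose_mul_self X with hHdef
  set Q : Matrix (Fin n) (Fin n) ℝ := (hH.eigenvectorUnitary : Matrix (Fin n) (Fin n) ℝ)
    with hQdef
  have hQ1 : Q * Qᵀ = 1 := by
    have h := (Matrix.mem_unitaryGroup_iff).mp hH.eigenvectorUnitary.2
    simp [Matrix.star_eq_conjTranspose,
      Matrix.conjTranspose_eq_transpose_of_trivial] at h
    exact h
  have hQ2 : Qᵀ * Q = 1 := by
    have h := (Matrix.mem_unitaryGroup_iff').mp hH.eigenvectorUnitary.2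
    simp [Matrix.star_eq_conjTranspose,
      Matrix.conjTranspose_eq_transpose_of_trivial] at h
    exact h
  have hdiag : Qᵀ * (Xᵀ * X) * Q = Matrix.diagonal hH.eigenvalues := by
    have h := hH.conjStarAlgAut_star_eigenvectorUnitary
    simp [Matrix.star_eq_conjTranspose,
      Matrix.conjTranspose_eq_transpose_of_trivial] at h
    exact h
  have tr_eq : (Wᵀ * X).trace = ∑ i, ((W * Q)ᵀ * (X * Q)) i i := by
    have h1 : (W * Q)ᵀ * (X * Q) = Qᵀ * (Wᵀ * X) * Q := by
      simp [Matrix.transpose_mul, Matrix.mul_assoc]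
    have h2 : (Qᵀ * (Wᵀ * X) * Q).trace = (Wᵀ * X).trace := by
      rw [Matrix.trace_mul_comm, ← Matrix.mul_assoc, hQ1, Matrix.one_mul]
    rw [← h2, ← h1]
    simp [Matrix.trace, Matrix.diag]
  rw [tr_eq, nuclearNorm, Finset.mul_sum]
  apply Finset.sum_le_sum
  intro i _
  have hent : ((W * Q)ᵀ * (X * Q)) i i = ∑ k, (W * Q) k i * (X * Q) k i := by
    simp [Matrix.mul_apply, mul_comm]
  have hXcol : (∑ k, ((X * Q) k i) ^ 2) = hH.eigenvalues i := by
    have h3 : (X * Q)ᵀ * (X * Q) = Qᵀ * (Xᵀ * X) * Q := by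
      simp [Matrix.transpose_mul, Matrix.mul_assoc]
    have h4 : ((X * Q)ᵀ * (X * Q)) i i = hH.eigenvalues i := by
      rw [h3, hdiag, Matrix.diagonal_apply_eq]
    rw [← h4]
    simp [Matrix.mul_apply, sq, mul_comm]
  have hWcol : (∑ k, ((W * Q) k i) ^ 2) ≤ τ ^ 2 := by
    have h5 := hop Q hQ1 hQ2 i
    have h6 : ((W * Q)ᵀ * (W * Q)) i i = ∑ k, ((W * Q) k i) ^ 2 := by
      simp [Matrix.mul_apply, sq, mul_comm]
    rwa [h6] at h5
  calc ((W * Q)ᵀ * (X * Q)) i i = ∑ k, (W * Q) k i * (X * Q) k i := hent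
    _ ≤ Real.sqrt (∑ k, ((W * Q) k i) ^ 2) * Real.sqrt (∑ k, ((X * Q) k i) ^ 2) :=
        Real.sum_mul_le_sqrt_mul_sqrt _ _ _
    _ ≤ τ * Real.sqrt (hH.eigenvalues i) := by
        rw [hXcol]
        apply mul_le_mul_of_nonneg_right _ (Real.sqrt_nonneg _)
        calc Real.sqrt (∑ k, ((W * Q) k i) ^ 2) ≤ Real.sqrt (τ ^ 2) :=
              Real.sqrt_le_sqrt hWcol
          _ = τ := Real.sqrt_sq hτ

lemma col_bound {m n : ℕ} (τ : ℝ) (hτ : 0 ≤ τ)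
    (U : Matrix (Fin m) (Fin m) ℝ) (V : Matrix (Fin n) (Fin n) ℝ)
    (hU' : Uᵀ * U = 1) (hV : V * Vᵀ = 1)
    (c : Fin (min m n) → ℝ) (hc : ∀ j, 0 ≤ c j ∧ c j ≤ τ)
    (Q : Matrix (Fin n) (Fin n) ℝ) (hQ1 : Q * Qᵀ = 1) (hQ2 : Qᵀ * Q = 1) (i : Fin n) :
    ((U * svdDiag m n c * Vᵀ * Q)ᵀ * (U * svdDiag m n c * Vᵀ * Q)) i i ≤ τ ^ 2 := by
  set W : Matrix (Fin m) (Fin n) ℝ := U * svdDiag m n c * Vᵀ with hWdef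
  set d' : Fin n → ℝ := fun j => if h : (j : ℕ) < min m n then c ⟨j, h⟩ * c ⟨j, h⟩ else 0
    with hd'def
  set R : Matrix (Fin n) (Fin n) ℝ := Vᵀ * Q with hRdef
  have hWW : (W * Q)ᵀ * (W * Q) = Rᵀ * Matrix.diagonal d' * R := by
    have h1 : Wᵀ * W = V * Matrix.diagonal d' * Vᵀ := by
      have : Wᵀ * W = V * ((svdDiag m n c)ᵀ * ((Uᵀ * U) * (svdDiag m n c))) * Vᵀ := by
        rw [hWdef]
        simp [Matrix.transpose_mul, Matrix.mul_assoc]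
      rw [this, hU', Matrix.one_mul, svdDiag_transpose_mul]
    have : (W * Q)ᵀ * (W * Q) = Qᵀ * (Wᵀ * W) * Q := by
      simp [Matrix.transpose_mul, Matrix.mul_assoc]
    rw [this, h1, hRdef]
    simp [Matrix.transpose_mul, Matrix.mul_assoc]
  have hentry : (Rᵀ * Matrix.diagonal d' * R) i i = ∑ j, d' j * (R j i) ^ 2 := by
    rw [Matrix.mul_assoc, Matrix.mul_apply]
    simp only [Matrix.transpose_apply]
    apply Finset.sum_congr rfl
    intro j _
    rw [Matrix.diagonal_mul]
    ring
  have hRcol : (∑ j, (R j i) ^ 2) = 1 := by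
    have h2 : Rᵀ * R = 1 := by
      rw [hRdef]
      have : (Vᵀ * Q)ᵀ * (Vᵀ * Q) = Qᵀ * (V * Vᵀ) * Q := by
        simp [Matrix.transpose_mul, Matrix.mul_assoc]
      rw [this, hV, Matrix.mul_one, hQ2]
    have h3 : (Rᵀ * R) i i = ∑ j, (R j i) ^ 2 := by
      simp [Matrix.mul_apply, sq]
    rw [← h3, h2, Matrix.one_apply_eq]
  rw [hWW, hentry]
  calc (∑ j, d' j * (R j i) ^ 2) ≤ ∑ j, τ ^ 2 * (R j i) ^ 2 := by
        apply Finset.sum_le_sum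
        intro j _
        apply mul_le_mul_of_nonneg_right _ (sq_nonneg _)
        by_cases h : (j : ℕ) < min m n
        · simp only [hd'def, dif_pos h]
          have := hc ⟨j, h⟩
          nlinarith [this.1, this.2]
        · simp only [hd'def, dif_neg h]
          positivity
    _ = τ ^ 2 := by rw [← Finset.mul_sum, hRcol, mul_one]

lemma trace_conj {m n : ℕ} (U : Matrix (Fin m) (Fin m) ℝ) (V : Matrix (Fin n) (Fin n) ℝ)
    (hU' : Uᵀ * U = 1) (hV' : Vᵀ * V = 1) (A B : Matrix (Fin m) (Fin n) ℝ) :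
    ((U * A * Vᵀ)ᵀ * (U * B * Vᵀ)).trace = (Aᵀ * B).trace := by
  have h1 : (U * A * Vᵀ)ᵀ * (U * B * Vᵀ) = V * (Aᵀ * ((Uᵀ * U) * (B * Vᵀ))) := by
    simp [Matrix.transpose_mul, Matrix.mul_assoc]
  rw [h1, hU', Matrix.one_mul, Matrix.trace_mul_comm]
  have h2 : Aᵀ * (B * Vᵀ) * V = Aᵀ * B * (Vᵀ * V) := by
    simp [Matrix.mul_assoc]
  rw [h2, hV', Matrix.mul_one]

lemma trace_expand {m n : ℕ} (A B : Matrix (Fin m) (Fin n) ℝ) :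
    ((A - B)ᵀ * (A - B)).trace =
      (Aᵀ * A).trace - 2 * (Bᵀ * A).trace + (Bᵀ * B).trace := by
  have hsym : (Aᵀ * B).trace = (Bᵀ * A).trace := by
    rw [← Matrix.trace_transpose, Matrix.transpose_mul, Matrix.transpose_transpose]
  simp only [Matrix.transpose_sub, Matrix.sub_mul, Matrix.mul_sub, Matrix.trace_sub]
  rw [hsym]
  ring

lemma trace_sq_nonneg {m n : ℕ} (A : Matrix (Fin m) (Fin n) ℝ) :
    0 ≤ (Aᵀ * A).trace := by
  rw [Matrix.trace]
  apply Finset.sum_nonneg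
  intro j _
  simp only [Matrix.diag_apply, Matrix.mul_apply, Matrix.transpose_apply]
  apply Finset.sum_nonneg
  intro i _
  exact mul_self_nonneg _

lemma eq_of_trace_sq_eq_zero {m n : ℕ} (A : Matrix (Fin m) (Fin n) ℝ)
    (h : (Aᵀ * A).trace = 0) : A = 0 := by
  ext i j
  have hdiag : ∀ k ∈ (Finset.univ : Finset (Fin n)), 0 ≤ (Aᵀ * A).diag k := by
    intro k _
    simp only [Matrix.diag_apply, Matrix.mul_apply, Matrix.transpose_apply]
    exact Finset.sum_nonneg fun i _ => mul_self_nonneg _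
  have h1 := (Finset.sum_eq_zero_iff_of_nonneg hdiag).mp h j (Finset.mem_univ _)
  simp only [Matrix.diag_apply, Matrix.mul_apply, Matrix.transpose_apply] at h1
  have h2 := (Finset.sum_eq_zero_iff_of_nonneg
    (fun i _ => mul_self_nonneg (A i j))).mp h1 i (Finset.mem_univ _)
  have := mul_self_eq_zero.mp h2
  simpa using this

end SVTHelpers

/-- singular value thresholding D_τ(M) = U diag(max(σᵢ − τ, 0)) Vᵀ
is the unique minimizer of X ↦ τ‖X‖_* + (1/2)‖X − M‖_F². -/
theorem svt_solves_nuclear_norm_prox (m n : ℕ) (τ : ℝ) (hτ : 0 < τ)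
    (M : Matrix (Fin m) (Fin n) ℝ)
    (U : Matrix (Fin m) (Fin m) ℝ) (V : Matrix (Fin n) (Fin n) ℝ)
    (σ : Fin (min m n) → ℝ) (hσ0 : ∀ j, 0 ≤ σ j)
    (hU : U * Uᵀ = 1) (hU' : Uᵀ * U = 1)
    (hV : V * Vᵀ = 1) (hV' : Vᵀ * V = 1)
    (hM : M = U * svdDiag m n σ * Vᵀ)
    (D : Matrix (Fin m) (Fin n) ℝ)
    (hD : D = U * svdDiag m n (fun j => max (σ j - τ) 0) * Vᵀ)
    (g : Matrix (Fin m) (Fin n) ℝ → ℝ)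
    (hg : ∀ X, g X = τ * nuclearNorm X + 1 / 2 * ((X - M)ᵀ * (X - M)).trace) :
    (∀ X, g D ≤ g X) ∧ ∀ X, g X = g D → X = D := by
  classical
  set s : Fin (min m n) → ℝ := fun j => max (σ j - τ) 0 with hsdef
  set c : Fin (min m n) → ℝ := fun j => min (σ j) τ with hcdef
  set W : Matrix (Fin m) (Fin n) ℝ := U * svdDiag m n c * Vᵀ with hWdef
  have hs0 : ∀ j, 0 ≤ s j := fun j => le_max_right _ _
  have hcτ : ∀ j, 0 ≤ c j ∧ c j ≤ τ := fun j => ⟨le_min (hσ0 j) hτ.le, min_le_right _ _⟩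
  have hsub : ∀ j, σ j - s j = c j := by
    intro j
    show σ j - max (σ j - τ) 0 = min (σ j) τ
    rcases le_total (σ j) τ with h | h
    · rw [max_eq_right (sub_nonpos.mpr h), min_eq_left h, sub_zero]
    · rw [max_eq_left (sub_nonneg.mpr h), min_eq_right h]
      ring
  have hWMD : M - D = W := by
    rw [hM, hD, hWdef, ← Matrix.sub_mul, ← Matrix.mul_sub, svdDiag_sub]
    have : (fun j => σ j - s j) = c := funext hsub
    rw [this]
  have hcs : ∀ j, c j * s j = τ * s j := by
    intro j
    rcases le_total (σ j) τ with h | h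
    · have hz : s j = 0 := max_eq_right (sub_nonpos.mpr h)
      rw [hz, mul_zero, mul_zero]
    · have hcj : c j = τ := min_eq_right h
      rw [hcj]
  have htrWD : (Wᵀ * D).trace = τ * ∑ j, s j := by
    rw [hWdef, hD, trace_conj U V hU' hV', svdDiag_transpose_mul, Matrix.trace_diagonal]
    rw [sum_dite_min (fun j => c j * s j), Finset.mul_sum]
    exact Finset.sum_congr rfl fun j _ => hcs j
  have hND : nuclearNorm D = ∑ j, s j := by
    have hDD : Dᴴ * D = V * Matrix.diagonal
        (fun j : Fin n => if h : (j : ℕ) < min m n then s ⟨j, h⟩ * s ⟨j, h⟩ else 0) * Vᵀ := by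
      rw [Matrix.conjTranspose_eq_transpose_of_trivial, hD]
      have : (U * svdDiag m n s * Vᵀ)ᵀ * (U * svdDiag m n s * Vᵀ)
          = V * ((svdDiag m n s)ᵀ * ((Uᵀ * U) * svdDiag m n s)) * Vᵀ := by
        simp [Matrix.transpose_mul, Matrix.mul_assoc]
      rw [this, hU', Matrix.one_mul, svdDiag_transpose_mul]
    have h1 := sum_f_eigenvalues (Matrix.isHermitian_conjTranspose_mul_self D) V _ hV hDD Real.sqrt
    rw [nuclearNorm, h1]
    have h2 : ∀ j : Fin n,
        Real.sqrt (if h : (j : ℕ) < min m n then s ⟨j, h⟩ * s ⟨j, h⟩ else 0)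
          = if h : (j : ℕ) < min m n then s ⟨j, h⟩ else 0 := by
      intro j
      by_cases h : (j : ℕ) < min m n
      · rw [dif_pos h, dif_pos h, Real.sqrt_mul_self (hs0 _)]
      · rw [dif_neg h, dif_neg h, Real.sqrt_zero]
    rw [Finset.sum_congr rfl fun j _ => h2 j, sum_dite_min (fun j => s j)]
  have key : ∀ X : Matrix (Fin m) (Fin n) ℝ, (Wᵀ * X).trace ≤ τ * nuclearNorm X := by
    intro X
    apply dual_bound τ hτ.le W X
    intro Q hQ1 hQ2 i
    rw [hWdef]
    exact col_bound τ hτ.le U V hU' hV c hcτ Q hQ1 hQ2 i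
  have hgdiff : ∀ X, g X - g D =
      (τ * nuclearNorm X - (Wᵀ * X).trace) + 1 / 2 * ((X - D)ᵀ * (X - D)).trace := by
    intro X
    have e1 : X - M = (X - D) - W := by rw [← hWMD]; abel
    have e2 : D - M = (0 : Matrix (Fin m) (Fin n) ℝ) - W := by rw [← hWMD]; abel
    have hWXD : (Wᵀ * (X - D)).trace = (Wᵀ * X).trace - τ * nuclearNorm D := by
      rw [Matrix.mul_sub, Matrix.trace_sub, htrWD, hND]
    rw [hg X, hg D, e1, e2, trace_expand, trace_expand, hWXD]
    have e3 : ((0 - W)ᵀ * ((0 : Matrix (Fin m) (Fin n) ℝ) - W)).trace = (Wᵀ * W).trace := by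
      rw [zero_sub, Matrix.transpose_neg, Matrix.neg_mul, Matrix.mul_neg, neg_neg]
    rw [e3]
    ring
  constructor
  · intro X
    have h1 := key X
    have h2 := trace_sq_nonneg (X - D)
    have h3 := hgdiff X
    linarith
  · intro X hXD
    have h1 := key X
    have h2 := trace_sq_nonneg (X - D)
    have h3 := hgdiff X
    rw [hXD] at h3
    have h4 : ((X - D)ᵀ * (X - D)).trace = 0 := by linarith
    have h5 := eq_of_trace_sq_eq_zero _ h4
    exact sub_eq_zero.mp h5
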